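/- Let σ > 0 and let μ satisfy 0 < μ < μ₃(σ), where μ₃(σ) = (σ + 1)/(3σ + 4), and let d̃₁ = (1/2 + δ̃(σ,μ), 1/2 − δ̃(σ,μ)) with δ̃(σ,μ) = √(−(3σ² + 4σ)μ² − 2(σ² + 3σ + 2)μ + (σ + 1)²) / (2(σμ + σ + 1)). Then the Jacobian matrix J of the map F(x,y) = (F₁(x,y), F₂(x,y)) at d̃₁ (the 2×2 matrix of partial derivatives of F₁ and F₂ with respect to x and y) satisfies J₁₁ = J₂₂ and J₁₂ = J₂₁, and both of its (real) eigenvalues J₁₁ + J₁₂ and J₁₁ − J₁₂ are strictly negative; that is, the stable divergent state d̃₁ is a sink. -/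

import Mathlib

noncomputable def F1 (σ μ x y : ℝ) : ℝ :=
  ((1 - x) - μ) * x * (x + σ * x * (1 - y)) - (x - μ) * (1 - x) * ((1 - x) + σ * (1 - x) * y)

noncomputable def F2 (σ μ x y : ℝ) : ℝ :=
  ((1 - y) - μ) * y * (y + σ * y * (1 - x)) - (y - μ) * (1 - y) * ((1 - y) + σ * (1 - y) * x)

noncomputable def deltaTilde (σ μ : ℝ) : ℝ :=
  Real.sqrt (-(3 * σ^2 + 4 * σ) * μ^2 - 2 * (σ^2 + 3 * σ + 2) * μ + (σ + 1)^2) /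
    (2 * (σ * μ + σ + 1))

/-- The entries of the Jacobian matrix of the vector field (F₁, F₂) at a point (x₀, y₀):
`J i j` is the partial derivative of the `i`-th component with respect to the `j`-th variable. -/
noncomputable def jacobian (σ μ x₀ y₀ : ℝ) : Matrix (Fin 2) (Fin 2) ℝ :=
  !![deriv (fun x => F1 σ μ x y₀) x₀, deriv (fun y => F1 σ μ x₀ y) y₀;
     deriv (fun x => F2 σ μ x y₀) x₀, deriv (fun y => F2 σ μ x₀ y) y₀]

lemma deriv_cubic (a b c e t : ℝ) :
    deriv (fun t : ℝ => a*t^3 + b*t^2 + c*t + e) t = 3*a*t^2 + 2*b*t + c := by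
  have h : HasDerivAt (fun t : ℝ => a*t^3 + b*t^2 + c*t + e) (3*a*t^2 + 2*b*t + c) t := by
    have h3 : HasDerivAt (fun t : ℝ => t^3) (3*t^2) t := by simpa using hasDerivAt_pow 3 t
    have h2 : HasDerivAt (fun t : ℝ => t^2) (2*t) t := by simpa using hasDerivAt_pow 2 t
    have h1 : HasDerivAt (fun t : ℝ => t) 1 t := hasDerivAt_id t
    have h := ((h3.const_mul a).add ((h2.const_mul b).add ((h1.const_mul c).add_const e)))
    have heq : a * (3*t^2) + (b * (2*t) + c * 1) = 3*a*t^2 + 2*b*t + c := by ring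
    have hfe : (fun x : ℝ => a*x^3 + (b*x^2 + (c*x + e))) = fun t : ℝ => a*t^3+b*t^2+c*t+e := by
      funext x; ring
    rw [heq] at h
    refine h.congr_of_eventuallyEq (Filter.Eventually.of_forall fun x => ?_)
    simp only [Pi.add_apply]; ring
  exact h.deriv

set_option maxHeartbeats 1000000 in
theorem divergent_state_is_sink (σ μ : ℝ) (hσ : 0 < σ)
    (hlo : 0 < μ) (hhi : μ < (σ + 1) / (3 * σ + 4)) :
    (jacobian σ μ (1/2 + deltaTilde σ μ) (1/2 - deltaTilde σ μ)) 0 0 =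
      (jacobian σ μ (1/2 + deltaTilde σ μ) (1/2 - deltaTilde σ μ)) 1 1 ∧
    (jacobian σ μ (1/2 + deltaTilde σ μ) (1/2 - deltaTilde σ μ)) 0 1 =
      (jacobian σ μ (1/2 + deltaTilde σ μ) (1/2 - deltaTilde σ μ)) 1 0 ∧
    (jacobian σ μ (1/2 + deltaTilde σ μ) (1/2 - deltaTilde σ μ)) 0 0 +
      (jacobian σ μ (1/2 + deltaTilde σ μ) (1/2 - deltaTilde σ μ)) 0 1 < 0 ∧
    (jacobian σ μ (1/2 + deltaTilde σ μ) (1/2 - deltaTilde σ μ)) 0 0 -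
      (jacobian σ μ (1/2 + deltaTilde σ μ) (1/2 - deltaTilde σ μ)) 0 1 < 0 := by
  set d := deltaTilde σ μ with hd
  set x₀ : ℝ := 1/2 + d with hx0
  set y₀ : ℝ := 1/2 - d with hy0
  have hA : (0:ℝ) < σ * μ + σ + 1 := by nlinarith
  have hB : (0:ℝ) < (σ + 1) - (3*σ + 4) * μ := by
    have h34 : (0:ℝ) < 3*σ + 4 := by linarith
    rw [lt_div_iff₀ h34] at hhi
    nlinarith
  have hR : (0:ℝ) ≤ -(3 * σ^2 + 4 * σ) * μ^2 - 2 * (σ^2 + 3 * σ + 2) * μ + (σ + 1)^2 := by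
    nlinarith [mul_pos hA hB]
  have hd2 : 4 * (σ * μ + σ + 1) * d^2 = (σ + 1) - (3*σ + 4) * μ := by
    rw [hd]
    unfold deltaTilde
    rw [div_pow, Real.sq_sqrt hR]
    field_simp
    ring
  -- derivatives
  have hJ00 : deriv (fun x => F1 σ μ x y₀) x₀
      = 1/2 - 6*d^2 - 2*μ + σ/4 - 5*σ*d^2 - σ*μ - 4*σ*μ*d^2 := by
    have e : (fun x => F1 σ μ x y₀)
        = (fun x : ℝ => (-2 - σ)*x^3 + (3 + σ + σ*y₀ - σ*μ + 2*σ*μ*y₀)*x^2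
            + (-1 - 2*μ - σ*y₀ - 2*σ*μ*y₀)*x + (μ + σ*μ*y₀)) := by
      funext t; simp only [F1]; ring
    rw [e, deriv_cubic, hx0, hy0]; ring
  have hJ01 : deriv (fun y => F1 σ μ x₀ y) y₀
      = -σ/4 + σ*d^2 + σ*μ/2 + 2*σ*μ*d^2 := by
    have e : (fun y => F1 σ μ x₀ y)
        = (fun y : ℝ => (0:ℝ)*y^3 + (0:ℝ)*y^2
            + (σ*(-x₀ + x₀^2 + μ - 2*μ*x₀ + 2*μ*x₀^2))*y
            + (-x₀ + 3*x₀^2 - 2*x₀^3 + μ - 2*μ*x₀ + σ*x₀^2 - σ*x₀^3 - σ*μ*x₀^2)) := by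
      funext t; simp only [F1]; ring
    rw [e, deriv_cubic, hx0]; ring
  have hJ10 : deriv (fun x => F2 σ μ x y₀) x₀
      = -σ/4 + σ*d^2 + σ*μ/2 + 2*σ*μ*d^2 := by
    have e : (fun x => F2 σ μ x y₀)
        = (fun x : ℝ => (0:ℝ)*x^3 + (0:ℝ)*x^2
            + (σ*(-y₀ + y₀^2 + μ - 2*μ*y₀ + 2*μ*y₀^2))*x
            + (-y₀ + 3*y₀^2 - 2*y₀^3 + μ - 2*μ*y₀ + σ*y₀^2 - σ*y₀^3 - σ*μ*y₀^2)) := by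
      funext t; simp only [F2]; ring
    rw [e, deriv_cubic, hy0]; ring
  have hJ11 : deriv (fun y => F2 σ μ x₀ y) y₀
      = 1/2 - 6*d^2 - 2*μ + σ/4 - 5*σ*d^2 - σ*μ - 4*σ*μ*d^2 := by
    have e : (fun y => F2 σ μ x₀ y)
        = (fun y : ℝ => (-2 - σ)*y^3 + (3 + σ + σ*x₀ - σ*μ + 2*σ*μ*x₀)*y^2
            + (-1 - 2*μ - σ*x₀ - 2*σ*μ*x₀)*y + (μ + σ*μ*x₀)) := by
      funext t; simp only [F2]; ring
    rw [e, deriv_cubic, hx0, hy0]; ring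
  have E00 : (jacobian σ μ x₀ y₀) 0 0 = deriv (fun x => F1 σ μ x y₀) x₀ := by simp [jacobian]
  have E01 : (jacobian σ μ x₀ y₀) 0 1 = deriv (fun y => F1 σ μ x₀ y) y₀ := by simp [jacobian]
  have E10 : (jacobian σ μ x₀ y₀) 1 0 = deriv (fun x => F2 σ μ x y₀) x₀ := by simp [jacobian]
  have E11 : (jacobian σ μ x₀ y₀) 1 1 = deriv (fun y => F2 σ μ x₀ y) y₀ := by simp [jacobian]
  rw [E00, E01, E10, E11, hJ00, hJ01, hJ10, hJ11]
  refine ⟨rfl, rfl, ?_, ?_⟩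
  · have key : 4 * (σ * μ + σ + 1) *
        ((1/2 - 6*d^2 - 2*μ + σ/4 - 5*σ*d^2 - σ*μ - 4*σ*μ*d^2)
          + (-σ/4 + σ*d^2 + σ*μ/2 + 2*σ*μ*d^2))
        = -(4 * ((σ * μ + σ + 1) * ((σ + 1) - (3*σ + 4) * μ)) + 8*σ*(σ+2)*μ^2) := by
      linear_combination (-(6 + 4*σ + 2*σ*μ)) * hd2
    have hneg : 4 * (σ * μ + σ + 1) *
        ((1/2 - 6*d^2 - 2*μ + σ/4 - 5*σ*d^2 - σ*μ - 4*σ*μ*d^2)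
          + (-σ/4 + σ*d^2 + σ*μ/2 + 2*σ*μ*d^2)) < 0 := by
      rw [key]
      nlinarith [mul_pos hA hB, mul_nonneg (mul_pos hσ (by linarith : (0:ℝ) < σ + 2)).le (sq_nonneg μ)]
    by_contra hcon
    push_neg at hcon
    nlinarith [mul_nonneg (by linarith : (0:ℝ) ≤ 4 * (σ * μ + σ + 1)) hcon]
  · have key : 4 * (σ * μ + σ + 1) *
        ((1/2 - 6*d^2 - 2*μ + σ/4 - 5*σ*d^2 - σ*μ - 4*σ*μ*d^2)
          - (-σ/4 + σ*d^2 + σ*μ/2 + 2*σ*μ*d^2))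
        = -(4 * ((σ * μ + σ + 1) * ((σ + 1) - (3*σ + 4) * μ))) := by
      linear_combination (-(6 + 6*σ + 6*σ*μ)) * hd2
    have hneg : 4 * (σ * μ + σ + 1) *
        ((1/2 - 6*d^2 - 2*μ + σ/4 - 5*σ*d^2 - σ*μ - 4*σ*μ*d^2)
          - (-σ/4 + σ*d^2 + σ*μ/2 + 2*σ*μ*d^2)) < 0 := by
      rw [key]
      nlinarith [mul_pos hA hB]
    by_contra hcon
    push_neg at hcon
    nlinarith [mul_nonneg (by linarith : (0:ℝ) ≤ 4 * (σ * μ + σ + 1)) hcon]
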